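/- Recursion for the gradient gap between the true process and its quadratic model: with the definitions below, for every t ≥ 1, Δ_t = (I − η H(x₀)) Δ_{t−1} − H(x₀)(w_{t−1} − w̃_{t−1}) − H'_{t−1}(η Δ_{t−1} + η ∇f̃(x̃_{t−1})) − H'_{t−1} w_{t−1} + θ_{t−1}. -/

import Mathlib

open InnerProductSpace MeasureTheory

/-- The Hessian of `f`, as the Fréchet derivative of the gradient. -/
noncomputable def Hess {d : ℕ} (f : EuclideanSpace ℝ (Fin d) → ℝ)
    (x : EuclideanSpace ℝ (Fin d)) :
    EuclideanSpace ℝ (Fin d) →L[ℝ] EuclideanSpace ℝ (Fin d) :=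
  fderiv ℝ (gradient f) x

section aux
variable {d : ℕ} {f : EuclideanSpace ℝ (Fin d) → ℝ}

theorem contDiff_grad (hf : ContDiff ℝ 2 f) : ContDiff ℝ 1 (gradient f) :=
  (toDual ℝ (EuclideanSpace ℝ (Fin d))).symm.contDiff.comp
    (hf.fderiv_right (by norm_num))

theorem hess_cont (hf : ContDiff ℝ 2 f) : Continuous (Hess f) :=
  (contDiff_grad hf).continuous_fderiv one_ne_zero

theorem ftc_grad (hf : ContDiff ℝ 2 f) (a u : EuclideanSpace ℝ (Fin d)) :
    gradient f (a + u) - gradient f a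
      = ∫ v in (0:ℝ)..1, Hess f (a + v • u) u := by
  have hg := contDiff_grad hf
  have hderiv : ∀ v ∈ Set.uIcc (0:ℝ) 1,
      HasDerivAt (fun v : ℝ => gradient f (a + v • u)) (Hess f (a + v • u) u) v := by
    intro v _
    have h1 : HasFDerivAt (gradient f) (Hess f (a + v • u)) (a + v • u) :=
      ((hg.differentiable one_ne_zero) (a + v • u)).hasFDerivAt
    have h2 : HasDerivAt (fun v : ℝ => a + v • u) u v := by
      simpa using ((hasDerivAt_id v).smul_const u).const_add a
    exact h1.comp_hasDerivAt v h2
  have hcont : Continuous fun v : ℝ => Hess f (a + v • u) u :=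
    ((hess_cont hf).comp (by continuity)).clm_apply continuous_const
  rw [intervalIntegral.integral_eq_sub_of_hasDerivAt hderiv
    (hcont.intervalIntegrable 0 1)]
  simp
end aux

/-- **Recursion for the gradient gap between the true process and its quadratic model.**
With `f̃` the second-order Taylor expansion of `f` at `x₀` (so
`∇f̃(z) = ∇f(x₀) + H(x₀)(z - x₀)`), iterates `x_{t+1} = x_t - η ∇f(x_t) - w_t` and
`x̃_{t+1} = x̃_t - η ∇f̃(x̃_t) - w̃_t` with `x̃₀ = x₀`,
`Δ_t = ∇f(x_t) - ∇f̃(x̃_t)`, `H'_t = H(x_t) - H(x₀)` and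
`θ_t = (∫₀¹ (H(x_t + v(x_{t+1} - x_t)) - H(x_t)) dv)(x_{t+1} - x_t)`, one has for all `t`:
`Δ_{t+1} = (I - η H(x₀)) Δ_t - H(x₀)(w_t - w̃_t) - H'_t (η Δ_t + η ∇f̃(x̃_t)) - H'_t w_t + θ_t`. -/
theorem gradient_gap_recursion {d : ℕ}
    (f : EuclideanSpace ℝ (Fin d) → ℝ)
    (hf : ContDiff ℝ 2 f)
    (x₀ : EuclideanSpace ℝ (Fin d)) (η : ℝ)
    (w wt x xt : ℕ → EuclideanSpace ℝ (Fin d))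
    (hx : ∀ t, x (t + 1) = x t - η • gradient f (x t) - w t)
    (hxt0 : xt 0 = x₀)
    (hxt : ∀ t, xt (t + 1) =
      xt t - η • (gradient f x₀ + Hess f x₀ (xt t - x₀)) - wt t) :
    ∀ t,
      (gradient f (x (t + 1)) - (gradient f x₀ + Hess f x₀ (xt (t + 1) - x₀))) =
        ((gradient f (x t) - (gradient f x₀ + Hess f x₀ (xt t - x₀)))
            - η • Hess f x₀ (gradient f (x t) - (gradient f x₀ + Hess f x₀ (xt t - x₀))))
          - Hess f x₀ (w t - wt t)
          - (Hess f (x t) - Hess f x₀)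
              (η • (gradient f (x t) - (gradient f x₀ + Hess f x₀ (xt t - x₀)))
                + η • (gradient f x₀ + Hess f x₀ (xt t - x₀)))
          - (Hess f (x t) - Hess f x₀) (w t)
          + (∫ v in (0:ℝ)..1, (Hess f (x t + v • (x (t + 1) - x t)) - Hess f (x t)))
              (x (t + 1) - x t) := by
  intro t
  have H := hess_cont hf
  set a := x t with ha
  set u := x (t + 1) - x t with hu
  have hbu : x (t + 1) = a + u := by rw [hu]; abel
  have hcomp : Continuous fun v : ℝ => Hess f (a + v • u) :=
    H.comp (continuous_const.add (continuous_id.smul continuous_const))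
  have hT : IntervalIntegrable (fun v : ℝ => Hess f (a + v • u) - Hess f a)
      volume 0 1 := ((hcomp.sub continuous_const).intervalIntegrable 0 1)
  have h1 : IntervalIntegrable (fun v : ℝ => Hess f (a + v • u) u) volume 0 1 :=
    (hcomp.clm_apply continuous_const).intervalIntegrable 0 1
  have happly : (∫ v in (0:ℝ)..1, (Hess f (a + v • u) - Hess f a)) u
      = ∫ v in (0:ℝ)..1, (Hess f (a + v • u) - Hess f a) u :=
    ContinuousLinearMap.intervalIntegral_apply hT u
  have hsplit : (∫ v in (0:ℝ)..1, (Hess f (a + v • u) - Hess f a) u)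
      = (∫ v in (0:ℝ)..1, Hess f (a + v • u) u) - Hess f a u := by
    simp_rw [ContinuousLinearMap.sub_apply]
    rw [intervalIntegral.integral_sub h1 intervalIntegrable_const]
    simp
  set th := (∫ v in (0:ℝ)..1, (Hess f (a + v • u) - Hess f a)) u with hth
  have key : gradient f (x (t + 1)) = gradient f a + Hess f a u + th := by
    rw [hbu, happly, hsplit, ← ftc_grad hf a u]; abel
  set r := xt t - x₀ with hr
  have h2 : xt (t + 1) - x₀ = r - η • (gradient f x₀ + Hess f x₀ r) - wt t := by
    rw [hxt t, hr]; abel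
  have hu' : u = -(η • gradient f a) - w t := by rw [hu, hx t]; abel
  rw [key, h2, hu']
  simp only [map_sub, map_add, _root_.map_smul, ContinuousLinearMap.sub_apply, map_neg]
  module
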